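/- Let m ≥ 2 and let G = Ml(m) be the Möbius ladder of order n = 2m (the circulant graph on ℤ_{2m} with connection set {1, −1, m}). Then γ_r2(G) = m. -/

import Mathlib

open SimpleGraph Finset

/-- `f` is a `k`-rainbow dominating function on `G`: every vertex with empty color set
has, for each color, a neighbour carrying that color. -/
def IsKRDF {V : Type*} (G : SimpleGraph V) (k : ℕ) (f : V → Finset (Fin k)) : Prop :=
  ∀ v : V, f v = ∅ → ∀ i : Fin k, ∃ u : V, G.Adj v u ∧ i ∈ f u

/-- The weight of a rainbow coloring function. -/
def rdfWeight {V : Type*} [Fintype V] {k : ℕ} (f : V → Finset (Fin k)) : ℕ :=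
  ∑ v : V, (f v).card

/-- The `k`-rainbow domination number of `G`: the minimum weight of a `k`-RDF. -/
noncomputable def rainbowDomNum {V : Type*} [Fintype V] (G : SimpleGraph V) (k : ℕ) : ℕ :=
  sInf {w : ℕ | ∃ f : V → Finset (Fin k), IsKRDF G k f ∧ rdfWeight f = w}

/-- The Möbius ladder `Ml(m)`: the circulant graph on `ℤ_{2m}` with connection set
`{1, -1, m}`. -/
def mobiusLadder (m : ℕ) : SimpleGraph (ZMod (2 * m)) :=
  SimpleGraph.circulantGraph {1, -1, (m : ZMod (2 * m))}

lemma m_add_m (m : ℕ) : (m : ZMod (2*m)) + m = 0 := by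
  calc (m : ZMod (2*m)) + m = ((2*m : ℕ) : ZMod (2*m)) := by push_cast; ring
    _ = 0 := ZMod.natCast_self _

lemma m_ne_zero (m : ℕ) (hm : 2 ≤ m) : (m : ZMod (2*m)) ≠ 0 := by
  haveI : NeZero (2*m) := ⟨by omega⟩
  intro h
  have h1 : ((m : ℕ) : ZMod (2*m)).val = m := by
    rw [ZMod.val_natCast]; exact Nat.mod_eq_of_lt (by omega)
  rw [h, ZMod.val_zero] at h1
  omega

lemma adj_cases {m : ℕ} (hm : 2 ≤ m) {v u : ZMod (2*m)} (h : (mobiusLadder m).Adj v u) :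
    u = v - 1 ∨ u = v + 1 ∨ u = v + m := by
  have hmm := m_add_m m
  rw [mobiusLadder, SimpleGraph.circulantGraph_adj] at h
  simp only [Set.mem_insert_iff, Set.mem_singleton_iff] at h
  rcases h.2 with (h1 | h1 | h1) | (h1 | h1 | h1)
  · exact Or.inl (by linear_combination -h1)
  · exact Or.inr (Or.inl (by linear_combination -h1))
  · exact Or.inr (Or.inr (by linear_combination -h1 - hmm))
  · exact Or.inr (Or.inl (by linear_combination h1))
  · exact Or.inl (by linear_combination h1)
  · exact Or.inr (Or.inr (by linear_combination h1))

lemma one_ne_zero'' (m : ℕ) (hm : 2 ≤ m) : (1 : ZMod (2*m)) ≠ 0 := by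
  haveI : Fact (1 < 2*m) := ⟨by omega⟩
  exact one_ne_zero

lemma adj_add_one {m : ℕ} (hm : 2 ≤ m) (v : ZMod (2*m)) : (mobiusLadder m).Adj v (v+1) := by
  rw [mobiusLadder, SimpleGraph.circulantGraph_adj]
  refine ⟨fun h => one_ne_zero'' m hm (by linear_combination -h), Or.inr ?_⟩
  simp

lemma adj_sub_one {m : ℕ} (hm : 2 ≤ m) (v : ZMod (2*m)) : (mobiusLadder m).Adj v (v-1) := by
  rw [mobiusLadder, SimpleGraph.circulantGraph_adj]
  refine ⟨fun h => one_ne_zero'' m hm (by linear_combination h), Or.inl ?_⟩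
  simp

lemma adj_add_m {m : ℕ} (hm : 2 ≤ m) (v : ZMod (2*m)) : (mobiusLadder m).Adj v (v+m) := by
  rw [mobiusLadder, SimpleGraph.circulantGraph_adj]
  refine ⟨fun h => m_ne_zero m hm (by linear_combination -h), Or.inr ?_⟩
  simp

lemma cycle_bound (n : ℕ) [NeZero n] (s : ZMod n → ℕ)
    (key : ∀ x, s x = 0 → 4 ≤ s (x - 1) + s (x + 1)) :
    n ≤ ∑ x : ZMod n, s x := by
  have pt : ∀ x : ZMod n,
      2 + ((s x - 1) * (if s (x-1) = 0 then 1 else 0) + (s x - 1) * (if s (x+1) = 0 then 1 else 0))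
        ≤ 2 * s x + ((if s x = 0 then 1 else 0) * (s (x-1) - 1) + (if s x = 0 then 1 else 0) * (s (x+1) - 1)) := by
    intro x
    by_cases hx : s x = 0
    · have h4 := key x hx
      split_ifs <;> omega
    · split_ifs <;> omega
  have hsum := Finset.sum_le_sum (fun x (_ : x ∈ univ) => pt x)
  rw [Finset.sum_add_distrib, Finset.sum_add_distrib, Finset.sum_add_distrib,
    Finset.sum_add_distrib, Finset.sum_const, Finset.card_univ, ZMod.card] at hsum
  have h1 : ∑ x : ZMod n, (s x - 1) * (if s (x-1) = 0 then 1 else 0)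
      = ∑ x : ZMod n, (if s x = 0 then 1 else 0) * (s (x+1) - 1) := by
    apply Fintype.sum_equiv (Equiv.subRight (1 : ZMod n))
    intro x
    simp only [Equiv.subRight_apply]
    rw [mul_comm, sub_add_cancel]
  have h2 : ∑ x : ZMod n, (s x - 1) * (if s (x+1) = 0 then 1 else 0)
      = ∑ x : ZMod n, (if s x = 0 then 1 else 0) * (s (x-1) - 1) := by
    apply Fintype.sum_equiv (Equiv.addRight (1 : ZMod n))
    intro x
    simp only [Equiv.coe_addRight]
    rw [mul_comm, add_sub_cancel_right]; rfl
  rw [h1, h2, ← Finset.mul_sum, smul_eq_mul] at hsum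
  omega

lemma lower_bound (m : ℕ) (hm : 2 ≤ m) (f : ZMod (2*m) → Finset (Fin 2))
    (hf : IsKRDF (mobiusLadder m) 2 f) :
    haveI : NeZero (2*m) := ⟨Nat.ne_of_gt (by omega)⟩
    m ≤ rdfWeight f := by
  haveI : NeZero (2*m) := ⟨by omega⟩
  have hmm := m_add_m m
  set s : ZMod (2*m) → ℕ := fun x => (f x).card + (f (x + m)).card with hs
  have hpair : ∀ y : ZMod (2*m), f y = ∅ → f (y + m) = ∅ →
      2 ≤ (f (y-1)).card + (f (y+1)).card := by
    intro y hy hym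
    have hmem : ∀ i : Fin 2, i ∈ f (y-1) ∪ f (y+1) := by
      intro i
      obtain ⟨u, hadj, hiu⟩ := hf y hy i
      rcases adj_cases hm hadj with h | h | h
      · exact Finset.mem_union_left _ (h ▸ hiu)
      · exact Finset.mem_union_right _ (h ▸ hiu)
      · rw [h, hym] at hiu; simp at hiu
    have hsub : (univ : Finset (Fin 2)) ⊆ f (y-1) ∪ f (y+1) := fun i _ => hmem i
    calc 2 = (univ : Finset (Fin 2)).card := by simp
      _ ≤ (f (y-1) ∪ f (y+1)).card := Finset.card_le_card hsub
      _ ≤ _ := Finset.card_union_le _ _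
  have key : ∀ x, s x = 0 → 4 ≤ s (x-1) + s (x+1) := by
    intro x hx
    simp only [hs] at hx
    have hfx : f x = ∅ := Finset.card_eq_zero.mp (by omega)
    have hfxm : f (x + m) = ∅ := Finset.card_eq_zero.mp (by omega)
    have h1 := hpair x hfx hfxm
    have h2 := hpair (x+m) hfxm (by rw [add_assoc, hmm, add_zero]; exact hfx)
    have e1 : (x + (m:ZMod (2*m))) - 1 = (x - 1) + m := by ring
    have e2 : (x + (m:ZMod (2*m))) + 1 = (x + 1) + m := by ring
    rw [e1, e2] at h2
    simp only [hs]
    omega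
  have hcb := cycle_bound (2*m) s key
  have hsplit : ∑ x : ZMod (2*m), s x = rdfWeight f + rdfWeight f := by
    simp only [hs]
    rw [Finset.sum_add_distrib]
    congr 1
    apply Fintype.sum_equiv (Equiv.addRight (m : ZMod (2*m)))
    intro x
    simp
  rw [hsplit] at hcb
  unfold rdfWeight at *
  omega

def myf (m : ℕ) (x : ZMod (2*m)) : Finset (Fin 2) :=
  if x.val % 2 = 1 then ∅
  else if x.val % 4 = 2 ∨ (m % 4 = 1 ∧ x.val = m - 1) then {1} else {0}

lemma mem_myf_zero {m : ℕ} {u : ZMod (2*m)} (h2 : u.val % 2 = 0)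
    (h4 : ¬(u.val % 4 = 2 ∨ (m % 4 = 1 ∧ u.val = m - 1))) : (0 : Fin 2) ∈ myf m u := by
  unfold myf
  rw [if_neg (by omega), if_neg h4]
  simp

lemma mem_myf_one {m : ℕ} {u : ZMod (2*m)} (h2 : u.val % 2 = 0)
    (h4 : u.val % 4 = 2 ∨ (m % 4 = 1 ∧ u.val = m - 1)) : (1 : Fin 2) ∈ myf m u := by
  unfold myf
  rw [if_neg (by omega), if_pos h4]
  simp

lemma range_even_count : ∀ k : ℕ, (∑ j ∈ Finset.range (2*k), if j % 2 = 1 then 0 else 1) = k := by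
  intro k
  induction k with
  | zero => simp
  | succ k ih =>
    have e1 : (2*k) % 2 = 0 := by omega
    have e2 : (2*k+1) % 2 = 1 := by omega
    rw [show 2*(k+1) = (2*k)+1+1 by ring, Finset.sum_range_succ, Finset.sum_range_succ, ih]
    simp [e1, e2]

def zmodFinEquiv (m : ℕ) (hm : 2 ≤ m) :
    haveI : NeZero (2*m) := ⟨Nat.ne_of_gt (by omega)⟩
    Fin (2*m) ≃ ZMod (2*m) :=
  haveI : NeZero (2*m) := ⟨Nat.ne_of_gt (by omega)⟩
  { toFun := fun j => ((j : ℕ) : ZMod (2*m))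
    invFun := fun x => ⟨x.val, x.val_lt⟩
    left_inv := fun j => by
      ext
      simp only [ZMod.val_natCast]
      exact Nat.mod_eq_of_lt j.isLt
    right_inv := fun x => ZMod.natCast_rightInverse x }

lemma weight_myf (m : ℕ) (hm : 2 ≤ m) :
    haveI : NeZero (2*m) := ⟨Nat.ne_of_gt (by omega)⟩
    rdfWeight (myf m) = m := by
  haveI : NeZero (2*m) := ⟨by omega⟩
  have hcard : ∀ x : ZMod (2*m), (myf m x).card = if x.val % 2 = 1 then 0 else 1 := by
    intro x; unfold myf; split_ifs <;> simp
  unfold rdfWeight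
  have h1 : ∑ x : ZMod (2*m), (myf m x).card
      = ∑ j : Fin (2*m), (if ((j : ℕ) : ZMod (2*m)).val % 2 = 1 then 0 else 1) := by
    refine (Fintype.sum_equiv (zmodFinEquiv m hm) _ _ ?_).symm
    intro j
    exact (hcard _).symm
  rw [h1]
  have h2 : ∀ j : Fin (2*m), ((j : ℕ) : ZMod (2*m)).val % 2 = (j : ℕ) % 2 := by
    intro j
    rw [ZMod.val_natCast, Nat.mod_eq_of_lt j.isLt]
  calc ∑ j : Fin (2*m), (if ((j : ℕ) : ZMod (2*m)).val % 2 = 1 then 0 else 1)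
      = ∑ j : Fin (2*m), (if (j : ℕ) % 2 = 1 then 0 else 1) := by
        apply Finset.sum_congr rfl; intro j _; rw [h2]
    _ = ∑ j ∈ Finset.range (2*m), (if j % 2 = 1 then 0 else 1) := by
        exact Fin.sum_univ_eq_sum_range (fun j => if j % 2 = 1 then 0 else 1) (2*m)
    _ = m := range_even_count m

lemma krdf_myf (m : ℕ) (hm : 2 ≤ m) : IsKRDF (mobiusLadder m) 2 (myf m) := by
  haveI : NeZero (2*m) := ⟨by omega⟩
  intro v hv i
  set a := v.val with ha
  have halt : a < 2*m := ZMod.val_lt v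
  have hodd : a % 2 = 1 := by
    by_contra h
    unfold myf at hv
    rw [← ha, if_neg h] at hv
    split_ifs at hv <;> simp at hv
  have hvc : ((a : ℕ) : ZMod (2*m)) = v := ZMod.natCast_rightInverse v
  have hv1 : a < 2*m - 1 → (v + 1).val = a + 1 := by
    intro h
    have h1 : v + 1 = ((a + 1 : ℕ) : ZMod (2*m)) := by rw [← hvc]; push_cast; ring
    rw [h1, ZMod.val_natCast]
    exact Nat.mod_eq_of_lt (by omega)
  have hv1' : a = 2*m - 1 → (v + 1).val = 0 := by
    intro h
    have h1 : v + 1 = ((a + 1 : ℕ) : ZMod (2*m)) := by rw [← hvc]; push_cast; ring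
    rw [h1, ZMod.val_natCast, show a + 1 = 2*m by omega]
    exact Nat.mod_self _
  have hvm1 : (v - 1).val = a - 1 := by
    have h1 : v - 1 = ((a - 1 : ℕ) : ZMod (2*m)) := by
      have h2 : ((a - 1 : ℕ) : ZMod (2*m)) + 1 = ((a : ℕ) : ZMod (2*m)) := by
        rw [show ((a - 1 : ℕ) : ZMod (2*m)) + 1 = (((a-1) + 1 : ℕ) : ZMod (2*m)) by push_cast; ring,
          show (a - 1) + 1 = a by omega]
      rw [← hvc, ← h2]; ring
    rw [h1, ZMod.val_natCast]
    exact Nat.mod_eq_of_lt (by omega)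
  have hvm : v + m = ((a + m : ℕ) : ZMod (2*m)) := by rw [← hvc]; push_cast; ring
  have hvmlt : a < m → (v + m).val = a + m := by
    intro h
    rw [hvm, ZMod.val_natCast]
    exact Nat.mod_eq_of_lt (by omega)
  have hvmge : m ≤ a → (v + m).val = a - m := by
    intro h
    rw [hvm, ZMod.val_natCast, Nat.mod_eq_sub_mod (by omega),
      Nat.mod_eq_of_lt (by omega)]
    omega
  by_cases hA : a = 2*m - 1
  · fin_cases i
    · exact ⟨v + 1, adj_add_one hm v, mem_myf_zero (by rw [hv1' hA] <;> omega) (by rw [hv1' hA] <;> omega)⟩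
    · by_cases hpar : m % 2 = 0
      · exact ⟨v - 1, adj_sub_one hm v, mem_myf_one (by rw [hvm1] <;> omega) (by rw [hvm1] <;> omega)⟩
      · exact ⟨v + m, adj_add_m hm v,
          mem_myf_one (by rw [hvmge (by omega)] <;> omega) (by rw [hvmge (by omega)] <;> omega)⟩
  · by_cases hB : a % 4 = 1
    · by_cases hAm : a = m
      · fin_cases i
        · exact ⟨v + m, adj_add_m hm v,
            mem_myf_zero (by rw [hvmge (by omega)] <;> omega) (by rw [hvmge (by omega)] <;> omega)⟩
        · exact ⟨v + 1, adj_add_one hm v,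
            mem_myf_one (by rw [hv1 (by omega)] <;> omega) (by rw [hv1 (by omega)] <;> omega)⟩
      · fin_cases i
        · exact ⟨v - 1, adj_sub_one hm v, mem_myf_zero (by rw [hvm1] <;> omega) (by rw [hvm1] <;> omega)⟩
        · exact ⟨v + 1, adj_add_one hm v,
            mem_myf_one (by rw [hv1 (by omega)] <;> omega) (by rw [hv1 (by omega)] <;> omega)⟩
    · by_cases hC : m % 4 = 1 ∧ a = m - 2
      · fin_cases i
        · exact ⟨v + m, adj_add_m hm v,
            mem_myf_zero (by rw [hvmlt (by omega)] <;> omega) (by rw [hvmlt (by omega)] <;> omega)⟩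
        · exact ⟨v - 1, adj_sub_one hm v, mem_myf_one (by rw [hvm1] <;> omega) (by rw [hvm1] <;> omega)⟩
      · fin_cases i
        · exact ⟨v + 1, adj_add_one hm v,
            mem_myf_zero (by rw [hv1 (by omega)] <;> omega) (by rw [hv1 (by omega)] <;> omega)⟩
        · exact ⟨v - 1, adj_sub_one hm v, mem_myf_one (by rw [hvm1] <;> omega) (by rw [hvm1] <;> omega)⟩

/-- For `m ≥ 2`, the Möbius ladder `Ml(m)` satisfies `γ_r2(Ml(m)) = m`. -/
theorem stmt_18 (m : ℕ) (hm : 2 ≤ m) :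
    haveI : NeZero (2 * m) := ⟨by omega⟩
    rainbowDomNum (mobiusLadder m) 2 = m := by
  haveI : NeZero (2 * m) := ⟨by omega⟩
  have hmem : m ∈ {w : ℕ | ∃ f : ZMod (2*m) → Finset (Fin 2),
      IsKRDF (mobiusLadder m) 2 f ∧ rdfWeight f = w} :=
    ⟨myf m, krdf_myf m hm, weight_myf m hm⟩
  unfold rainbowDomNum
  apply le_antisymm
  · exact Nat.sInf_le hmem
  · obtain ⟨f, hf, hw⟩ := Nat.sInf_mem (⟨m, hmem⟩ : Set.Nonempty _)
    rw [← hw]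
    exact lower_bound m hm f hf
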